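/- For all m > 0, b ≥ 0 and z > 0: ∫₀^∞ τ^{−2} e^{−τm²} e^{−z²/(4τ)} [ 3/(2τ) + 5b + m² + b z²/(2τ) + z²/(4τ²) + 2bτ(m² + 2b) ] dτ ≤ 4 { K₁(mz) · [ 14m/z³ + (2m³ + 7mb)/z ] + K₀(mz) · [ 7m²/z² + 2b(m² + b) ] }. -/

import Mathlib

open Real MeasureTheory

/-- The modified Bessel function of the second kind,
`K_ν(z) = ∫₀^∞ e^{-z cosh u} cosh(νu) du` for `z > 0`. -/
noncomputable def besselK (ν z : ℝ) : ℝ :=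
  ∫ u in Set.Ioi (0 : ℝ), Real.exp (-z * Real.cosh u) * Real.cosh (ν * u)

open Set Filter Topology

lemma besselK_decay_aux {c : ℝ} (hc : 0 < c) (k : ℝ) :
    Tendsto (fun u : ℝ => Real.exp (-c * Real.cosh u + k * u)) atTop (𝓝 0) := by
  have h2 : Tendsto (fun u : ℝ => Real.exp (-(2 * u))) atTop (𝓝 0) :=
    Real.tendsto_exp_atBot.comp
      (tendsto_neg_atTop_atBot.comp (tendsto_id.const_mul_atTop two_pos))
  have hcosh : Tendsto (fun u : ℝ => Real.cosh u * Real.exp (-u)) atTop (𝓝 (1 / 2)) := by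
    have heq : (fun u : ℝ => Real.cosh u * Real.exp (-u))
        = fun u => 1 / 2 + Real.exp (-(2 * u)) / 2 := by
      funext u
      have h1 : Real.exp (-(2 * u)) = Real.exp (-u) * Real.exp (-u) := by
        rw [← Real.exp_add]; ring_nf
      rw [Real.cosh_eq, h1]
      have h0 : Real.exp u * Real.exp (-u) = 1 := by rw [← Real.exp_add]; simp
      linear_combination h0 / 2
    rw [heq]
    have := tendsto_const_nhds (α := ℝ) (x := (1:ℝ)/2) (f := atTop).add (h2.div_const 2)
    simpa using this
  have hu : Tendsto (fun u : ℝ => u * Real.exp (-u)) atTop (𝓝 0) := by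
    simpa using tendsto_pow_mul_exp_neg_atTop_nhds_zero 1
  have hfac : Tendsto (fun u : ℝ => (-c * Real.cosh u + k * u) * Real.exp (-u)) atTop
      (𝓝 (-c / 2)) := by
    have h := (hcosh.const_mul (-c)).add (hu.const_mul k)
    have he : (fun u : ℝ => -c * (Real.cosh u * Real.exp (-u)) + k * (u * Real.exp (-u)))
        = fun u => (-c * Real.cosh u + k * u) * Real.exp (-u) := by funext u; ring
    rw [he] at h
    convert h using 2
    ring
  have hbot : Tendsto (fun u : ℝ => -c * Real.cosh u + k * u) atTop atBot := by
    have h := Real.tendsto_exp_atTop.atTop_mul_neg (show -c / 2 < 0 by linarith) hfac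
    refine h.congr fun u => ?_
    rw [Real.exp_neg]
    have := (Real.exp_pos u).ne'
    field_simp
  exact Real.tendsto_exp_atBot.comp hbot

lemma besselK_integrable_aux {c : ℝ} (hc : 0 < c) (k : ℝ) :
    Integrable (fun u : ℝ => Real.exp (-c * Real.cosh u) * Real.exp (k * u)) := by
  have hfun : ∀ j : ℝ, (fun u : ℝ => Real.exp (-c * Real.cosh u) * Real.exp (j * u))
      = fun u => Real.exp (-c * Real.cosh u + j * u) := by
    intro j; funext u; rw [← Real.exp_add]
  have hIoi : ∀ j : ℝ,
      IntegrableOn (fun u : ℝ => Real.exp (-c * Real.cosh u + j * u)) (Ioi 0) := by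
    intro j
    refine integrable_of_isBigO_exp_neg one_pos ?_ ?_
    · exact (((continuous_const.mul Real.continuous_cosh).add
        (continuous_const.mul continuous_id)).rexp).continuousOn
    · refine Asymptotics.IsLittleO.isBigO ?_
      refine (Asymptotics.isLittleO_iff_tendsto fun x hx =>
        absurd hx (Real.exp_ne_zero _)).2 ?_
      refine (besselK_decay_aux hc (j + 1)).congr fun u => ?_
      rw [div_eq_mul_inv, ← Real.exp_neg, ← Real.exp_add]
      congr 1
      ring
  have hIic : ∀ j : ℝ,
      IntegrableOn (fun u : ℝ => Real.exp (-c * Real.cosh u + j * u)) (Iic 0) := by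
    intro j
    rw [← (Measure.measurePreserving_neg (volume : Measure ℝ)).integrableOn_comp_preimage
        (Homeomorph.neg ℝ).measurableEmbedding]
    simp only [Function.comp_def, neg_preimage, neg_Iic, neg_zero]
    rw [integrableOn_Ici_iff_integrableOn_Ioi]
    refine (hIoi (-j)).congr_fun (fun x _ => ?_) measurableSet_Ioi
    rw [Real.cosh_neg]
    congr 1
    ring
  rw [hfun, ← integrableOn_univ, ← Set.Iic_union_Ioi (a := (0 : ℝ)), integrableOn_union]
  exact ⟨hIic k, hIoi k⟩

noncomputable def Wint (c k : ℝ) : ℝ :=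
  ∫ u : ℝ, Real.exp (-c * Real.cosh u) * Real.exp (k * u)

lemma Wint_split {c : ℝ} (hc : 0 < c) (k : ℝ) :
    Wint c k = ∫ u in Ioi (0 : ℝ),
      Real.exp (-c * Real.cosh u) * (Real.exp (k * u) + Real.exp (-(k * u))) := by
  have hInt := besselK_integrable_aux hc k
  have hInt' := besselK_integrable_aux hc (-k)
  have h := integral_comp_neg_Iic (0 : ℝ)
    (fun x => Real.exp (-c * Real.cosh x) * Real.exp (-(k * x)))
  simp only [Real.cosh_neg, neg_zero, mul_neg, neg_neg] at h
  have hsum := intervalIntegral.integral_Iic_add_Ioi (b := (0:ℝ))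
    hInt.integrableOn hInt.integrableOn
  unfold Wint
  rw [← hsum, h, ← integral_add]
  · apply setIntegral_congr_fun measurableSet_Ioi
    intro x _
    ring
  · refine (hInt'.congr ?_).integrableOn
    refine Eventually.of_forall fun x => ?_
    simp only [neg_mul]
  · exact hInt.integrableOn

lemma Wint_neg {c : ℝ} (hc : 0 < c) (k : ℝ) : Wint c (-k) = Wint c k := by
  rw [Wint_split hc, Wint_split hc]
  apply setIntegral_congr_fun measurableSet_Ioi
  intro x _
  simp only [neg_mul, neg_neg]
  ring

lemma Wint_one {c : ℝ} (hc : 0 < c) : Wint c 1 = 2 * besselK 1 c := by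
  rw [Wint_split hc, besselK, ← MeasureTheory.integral_const_mul]
  apply setIntegral_congr_fun measurableSet_Ioi
  intro x _
  simp only [one_mul, Real.cosh_eq]
  ring

lemma Wint_zero {c : ℝ} (hc : 0 < c) : Wint c 0 = 2 * besselK 0 c := by
  rw [Wint_split hc, besselK, ← MeasureTheory.integral_const_mul]
  apply setIntegral_congr_fun measurableSet_Ioi
  intro x _
  simp only [zero_mul, neg_zero, Real.exp_zero, Real.cosh_zero]
  ring

lemma Wint_rec {c : ℝ} (hc : 0 < c) (k : ℝ) :
    k * Wint c k = c / 2 * Wint c (k + 1) - c / 2 * Wint c (k - 1) := by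
  set F : ℝ → ℝ := fun u => Real.exp (-c * Real.cosh u + k * u) with hF
  set F' : ℝ → ℝ := fun u => Real.exp (-c * Real.cosh u + k * u) * (-c * Real.sinh u + k)
    with hF'def
  have hderiv : ∀ u : ℝ, HasDerivAt F (F' u) u := by
    intro u
    have h1 : HasDerivAt (fun v : ℝ => -c * Real.cosh v + k * v) (-c * Real.sinh u + k) u := by
      have := ((Real.hasDerivAt_cosh u).const_mul (-c)).add ((hasDerivAt_id u).const_mul k)
      simpa [mul_comm, Pi.add_def] using this
    exact h1.exp
  have hptw : ∀ u : ℝ, F' u =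
      k * (Real.exp (-c * Real.cosh u) * Real.exp (k * u))
      + (-(c / 2) * (Real.exp (-c * Real.cosh u) * Real.exp ((k + 1) * u))
      + (c / 2 * (Real.exp (-c * Real.cosh u) * Real.exp ((k - 1) * u)))) := by
    intro u
    have e0 : Real.exp (-c * Real.cosh u + k * u)
        = Real.exp (-c * Real.cosh u) * Real.exp (k * u) := by rw [← Real.exp_add]
    have e1 : Real.exp ((k + 1) * u) = Real.exp (k * u) * Real.exp u := by
      rw [← Real.exp_add]; ring_nf
    have e2 : Real.exp ((k - 1) * u) = Real.exp (k * u) * Real.exp (-u) := by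
      rw [← Real.exp_add]; ring_nf
    rw [hF'def]
    simp only []
    rw [e0, e1, e2, Real.sinh_eq]
    ring
  have hint : Integrable F' := by
    refine (((besselK_integrable_aux hc k).const_mul k).add
      (((besselK_integrable_aux hc (k + 1)).const_mul (-(c / 2))).add
        ((besselK_integrable_aux hc (k - 1)).const_mul (c / 2)))).congr ?_
    exact Eventually.of_forall fun u => (hptw u).symm
  have htop : Tendsto F atTop (𝓝 0) := besselK_decay_aux hc k
  have hbot : Tendsto F atBot (𝓝 0) := by
    have h := (besselK_decay_aux hc (-k)).comp tendsto_neg_atBot_atTop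
    refine h.congr fun u => ?_
    simp only [Function.comp_apply, Real.cosh_neg]
    congr 2
    ring
  have h0 : (∫ u : ℝ, F' u) = 0 := by
    have := MeasureTheory.integral_of_hasDerivAt_of_tendsto hderiv hint hbot htop
    simpa using this
  have hi1 : Integrable (fun u : ℝ => k * (Real.exp (-c * Real.cosh u) * Real.exp (k * u))) :=
    (besselK_integrable_aux hc k).const_mul k
  have hi2 : Integrable (fun u : ℝ =>
      -(c / 2) * (Real.exp (-c * Real.cosh u) * Real.exp ((k + 1) * u))) :=
    (besselK_integrable_aux hc (k + 1)).const_mul _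
  have hi3 : Integrable (fun u : ℝ =>
      c / 2 * (Real.exp (-c * Real.cosh u) * Real.exp ((k - 1) * u))) :=
    (besselK_integrable_aux hc (k - 1)).const_mul _
  have hi23 : Integrable (fun u : ℝ =>
      -(c / 2) * (Real.exp (-c * Real.cosh u) * Real.exp ((k + 1) * u))
      + c / 2 * (Real.exp (-c * Real.cosh u) * Real.exp ((k - 1) * u))) := hi2.add hi3
  have hsplit : (∫ u : ℝ, F' u) = k * Wint c k
      + (-(c / 2) * Wint c (k + 1) + c / 2 * Wint c (k - 1)) := by
    rw [integral_congr_ae (Eventually.of_forall hptw), integral_add hi1 hi23,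
      integral_add hi2 hi3, MeasureTheory.integral_const_mul, MeasureTheory.integral_const_mul,
      MeasureTheory.integral_const_mul]
    rfl
  rw [hsplit] at h0
  linarith

/-- For all `m > 0`, `b ≥ 0` and `z > 0`:
`∫₀^∞ τ⁻² e^{-τm²} e^{-z²/(4τ)} [3/(2τ) + 5b + m² + bz²/(2τ) + z²/(4τ²) + 2bτ(m²+2b)] dτ
  ≤ 4 { K₁(mz) [14m/z³ + (2m³+7mb)/z] + K₀(mz) [7m²/z² + 2b(m²+b)] }`. -/
theorem kinKernel_integral_le_besselK (m b z : ℝ) (hm : 0 < m) (hb : 0 ≤ b) (hz : 0 < z) :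
    (∫ τ in Set.Ioi (0 : ℝ),
        τ ^ (-(2 : ℝ)) * Real.exp (-τ * m ^ 2) * Real.exp (-z ^ 2 / (4 * τ)) *
          (3 / (2 * τ) + 5 * b + m ^ 2 + b * z ^ 2 / (2 * τ) + z ^ 2 / (4 * τ ^ 2) +
            2 * b * τ * (m ^ 2 + 2 * b))) ≤
      4 * (besselK 1 (m * z) * (14 * m / z ^ 3 + (2 * m ^ 3 + 7 * m * b) / z) +
           besselK 0 (m * z) * (7 * m ^ 2 / z ^ 2 + 2 * b * (m ^ 2 + b))) := by
  have hm' : m ≠ 0 := hm.ne'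
  have hz' : z ≠ 0 := hz.ne'
  have hc : (0:ℝ) < m * z := mul_pos hm hz
  set c : ℝ := m * z with hcdef
  set A : ℝ := z / (2 * m) with hAdef
  have hA : 0 < A := by positivity
  set G : ℝ → ℝ := fun τ =>
    τ ^ (-(2 : ℝ)) * Real.exp (-τ * m ^ 2) * Real.exp (-z ^ 2 / (4 * τ)) *
      (3 / (2 * τ) + 5 * b + m ^ 2 + b * z ^ 2 / (2 * τ) + z ^ 2 / (4 * τ ^ 2) +
        2 * b * τ * (m ^ 2 + 2 * b)) with hGdef
  have himg : (fun u : ℝ => A * Real.exp u) '' Set.univ = Ioi (0:ℝ) := by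
    rw [image_univ]
    ext τ
    simp only [mem_range, mem_Ioi]
    constructor
    · rintro ⟨u, rfl⟩; positivity
    · intro hτ
      refine ⟨Real.log (τ / A), ?_⟩
      rw [Real.exp_log (by positivity)]
      field_simp
  have hinj : Set.InjOn (fun u : ℝ => A * Real.exp u) Set.univ := by
    intro u _ v _ h
    exact Real.exp_injective (mul_left_cancel₀ hA.ne' h)
  have hchg : (∫ τ in Ioi (0:ℝ), G τ) = ∫ u : ℝ, |A * Real.exp u| • G (A * Real.exp u) := by
    rw [← himg, integral_image_eq_integral_abs_deriv_smul MeasurableSet.univ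
      (fun x _ => ((Real.hasDerivAt_exp x).const_mul A).hasDerivWithinAt) hinj G,
      Measure.restrict_univ]
  have hpt : ∀ u : ℝ, |A * Real.exp u| • G (A * Real.exp u)
      = 2 * m ^ 3 / z * (Real.exp (-c * Real.cosh u) * Real.exp ((-3 : ℝ) * u))
      + ((6 * m ^ 2 / z ^ 2 + 2 * b * m ^ 2)
          * (Real.exp (-c * Real.cosh u) * Real.exp ((-2 : ℝ) * u))
      + ((10 * b * m / z + 2 * m ^ 3 / z)
          * (Real.exp (-c * Real.cosh u) * Real.exp ((-1 : ℝ) * u))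
      + 2 * b * (m ^ 2 + 2 * b)
          * (Real.exp (-c * Real.cosh u) * Real.exp ((0 : ℝ) * u)))) := by
    intro u
    have ht : (0:ℝ) < Real.exp u := Real.exp_pos u
    have hτ : 0 < A * Real.exp u := by positivity
    have hinv : Real.exp (-u) = (Real.exp u)⁻¹ := Real.exp_neg u
    have hE : Real.exp (-c * Real.cosh u)
        = Real.exp (-(A * Real.exp u) * m ^ 2) * Real.exp (-z ^ 2 / (4 * (A * Real.exp u))) := by
      rw [← Real.exp_add]
      congr 1
      rw [Real.cosh_eq, Real.exp_neg, hAdef, hcdef]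
      field_simp
      ring
    have h3 : Real.exp ((-3 : ℝ) * u) = (Real.exp u)⁻¹ ^ 3 := by
      rw [← hinv, ← Real.exp_nat_mul]
      congr 1
      push_cast
      ring
    have h2 : Real.exp ((-2 : ℝ) * u) = (Real.exp u)⁻¹ ^ 2 := by
      rw [← hinv, ← Real.exp_nat_mul]
      congr 1
      push_cast
      ring
    have h1 : Real.exp ((-1 : ℝ) * u) = (Real.exp u)⁻¹ := by
      rw [← hinv]
      congr 1
      ring
    have h0 : Real.exp ((0 : ℝ) * u) = 1 := by rw [zero_mul, Real.exp_zero]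
    rw [hGdef]
    simp only []
    rw [abs_of_pos hτ, smul_eq_mul, hE, h3, h2, h1, h0,
      show (-(2:ℝ)) = -((2:ℕ):ℝ) by norm_num, Real.rpow_neg hτ.le, Real.rpow_natCast, hAdef]
    field_simp
    ring
  have hI : ∀ kk : ℝ, Integrable
      (fun u : ℝ => Real.exp (-c * Real.cosh u) * Real.exp (kk * u)) :=
    fun kk => besselK_integrable_aux hc kk
  have hi3 : Integrable (fun u : ℝ => 2 * m ^ 3 / z
      * (Real.exp (-c * Real.cosh u) * Real.exp ((-3 : ℝ) * u))) := (hI _).const_mul _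
  have hi2 : Integrable (fun u : ℝ => (6 * m ^ 2 / z ^ 2 + 2 * b * m ^ 2)
      * (Real.exp (-c * Real.cosh u) * Real.exp ((-2 : ℝ) * u))) := (hI _).const_mul _
  have hi1 : Integrable (fun u : ℝ => (10 * b * m / z + 2 * m ^ 3 / z)
      * (Real.exp (-c * Real.cosh u) * Real.exp ((-1 : ℝ) * u))) := (hI _).const_mul _
  have hi0 : Integrable (fun u : ℝ => 2 * b * (m ^ 2 + 2 * b)
      * (Real.exp (-c * Real.cosh u) * Real.exp ((0 : ℝ) * u))) := (hI _).const_mul _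
  have hi10 : Integrable (fun u : ℝ =>
      (10 * b * m / z + 2 * m ^ 3 / z) * (Real.exp (-c * Real.cosh u) * Real.exp ((-1 : ℝ) * u))
      + 2 * b * (m ^ 2 + 2 * b) * (Real.exp (-c * Real.cosh u) * Real.exp ((0 : ℝ) * u))) :=
    hi1.add hi0
  have hi210 : Integrable (fun u : ℝ =>
      (6 * m ^ 2 / z ^ 2 + 2 * b * m ^ 2)
        * (Real.exp (-c * Real.cosh u) * Real.exp ((-2 : ℝ) * u))
      + ((10 * b * m / z + 2 * m ^ 3 / z)
        * (Real.exp (-c * Real.cosh u) * Real.exp ((-1 : ℝ) * u))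
      + 2 * b * (m ^ 2 + 2 * b)
        * (Real.exp (-c * Real.cosh u) * Real.exp ((0 : ℝ) * u)))) := hi2.add hi10
  have key : (∫ τ in Ioi (0:ℝ), G τ)
      = 2 * m ^ 3 / z * Wint c (-3)
      + ((6 * m ^ 2 / z ^ 2 + 2 * b * m ^ 2) * Wint c (-2)
      + ((10 * b * m / z + 2 * m ^ 3 / z) * Wint c (-1)
      + 2 * b * (m ^ 2 + 2 * b) * Wint c 0)) := by
    rw [hchg, integral_congr_ae (Eventually.of_forall hpt), integral_add hi3 hi210,
      integral_add hi2 hi10, integral_add hi1 hi0, MeasureTheory.integral_const_mul,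
      MeasureTheory.integral_const_mul, MeasureTheory.integral_const_mul,
      MeasureTheory.integral_const_mul]
    rfl
  have hc' : c ≠ 0 := hc.ne'
  have hsym : Wint c (-1) = Wint c 1 := Wint_neg hc 1
  have r1 := Wint_rec hc (-1)
  have r2 := Wint_rec hc (-2)
  norm_num at r1 r2
  have e2 : Wint c (-2) = Wint c 0 + 2 / c * Wint c 1 := by
    field_simp
    linear_combination 2 * r1 + 2 * hsym
  have e3 : Wint c (-3) = Wint c 1 + 4 / c * Wint c (-2) := by
    field_simp
    linear_combination 2 * r2 + (m * z) * hsym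
  have hK1 : besselK 1 c = Wint c 1 / 2 := by rw [Wint_one hc]; ring
  have hK0 : besselK 0 c = Wint c 0 / 2 := by rw [Wint_zero hc]; ring
  apply le_of_eq
  rw [key, hK1, hK0, e3, e2, hsym]
  field_simp
  ring
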